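/- arXiv:cs/0606033 — 2 statements merged into one kernel-verified Lean document; each statement's English description precedes it below -/
import Mathlib

section
/- The domain of a universal self-delimiting Turing machine U cannot consist only of strings whose lengths are integer powers of two: it is not the case that for every p ∈ dom(U) there exists k : ℕ with |p| = 2^k. -/
open scoped ENNReal

/-- The domain of a Turing machine (a partial function on binary strings). -/
def dom (f : List Bool →. List Bool) : Set (List Bool) := {p | (f p).Dom}

/-- A machine is self-delimiting if its domain is prefix-free. -/
def SelfDelim (f : List Bool →. List Bool) : Prop :=
  ∀ p ∈ dom f, ∀ q ∈ dom f, p <+: q → p = q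

/-- Chaitin's Omega number of a machine, in `[0,∞]`. -/
noncomputable def Omega (f : List Bool →. List Bool) : ℝ≥0∞ :=
  ∑' p : dom f, (2 : ℝ≥0∞)⁻¹ ^ (p : List Bool).length

/-- `bin n` is the binary expansion of `n` with the leading 1 removed. -/
def bin (n : ℕ) : List Bool := (Nat.bits n).reverse.tail

/-- `Υ[A]`: the set of positive integers whose `bin`-code lies in `A`. -/
def Ups (A : Set (List Bool)) : Set ℕ := {n | 1 ≤ n ∧ bin n ∈ A}

/-- The zeta number of a machine, in `[0,∞]`. -/
noncomputable def zeta (f : List Bool →. List Bool) : ℝ≥0∞ :=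
  ∑' n : Ups (dom f), ((n : ℕ) : ℝ≥0∞)⁻¹

/-- `U` is a universal self-delimiting Turing machine. -/
def UnivSD (U : List Bool →. List Bool) : Prop :=
  SelfDelim U ∧ ∀ C : List Bool →. List Bool, Partrec C → SelfDelim C →
    ∃ c : ℕ, ∀ x ∈ dom C, ∃ p : List Bool, p.length ≤ x.length + c ∧ U p = C x

/-- `T` is a universal (plain) Turing machine. -/
def UnivTM (T : List Bool →. List Bool) : Prop :=
  ∀ C : List Bool →. List Bool, Partrec C →
    ∃ c : ℕ, ∀ x ∈ dom C, ∃ p : List Bool, p.length ≤ x.length + c ∧ T p = C x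

/-- Program-size / plain complexity of a string w.r.t. a machine. -/
noncomputable def Cpx (f : List Bool →. List Bool) (y : List Bool) : ℕ :=
  sInf {n : ℕ | ∃ w : List Bool, w.length = n ∧ y ∈ f w}

/-- Natural complexity of a string w.r.t. a machine, with `min ∅ = ∞`. -/
noncomputable def nabla (f : List Bool →. List Bool) (y : List Bool) : ℝ≥0∞ :=
  sInf {c : ℝ≥0∞ | ∃ n : ℕ, 1 ≤ n ∧ y ∈ f (bin n) ∧ c = (n : ℝ≥0∞)}

/-- The real number with binary digit sequence `x`. -/
noncomputable def realDigits (x : ℕ → Bool) : ℝ :=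
  ∑' i : ℕ, (if x i then (1 : ℝ) else 0) * (2 : ℝ)⁻¹ ^ (i + 1)

/-- The extended nonnegative real with binary digit sequence `x`. -/
noncomputable def ennDigits (x : ℕ → Bool) : ℝ≥0∞ :=
  ∑' i : ℕ, (if x i then (1 : ℝ≥0∞) else 0) * (2 : ℝ≥0∞)⁻¹ ^ (i + 1)

/-- The string of the first `m` digits of the sequence `x`. -/
def prefixStr (x : ℕ → Bool) (m : ℕ) : List Bool := (List.range m).map x

/-- A real is computable if it is approximated to within `2⁻ⁿ` by a computable
sequence of rationals. -/
def ComputableReal (s : ℝ) : Prop :=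
  ∃ f : ℕ → ℚ, Computable f ∧ ∀ n : ℕ, |s - (f n : ℝ)| ≤ (2 : ℝ)⁻¹ ^ n

private def Cm : List Bool →. List Bool := fun x =>
  ((if x.length = 2 ^ (List.idxOf false x) + List.idxOf false x + 2 then some x else none :
    Option (List Bool)) : Part (List Bool))

private lemma Cm_partrec : Partrec Cm := by
  have hlead : Primrec (fun x : List Bool => List.idxOf false x) :=
    Primrec.list_idxOf.comp (Primrec.const false) Primrec.id
  have hpow : Primrec (fun t : ℕ => 2 ^ t) :=
    (Primrec₂.unpaired'.1 Nat.Primrec.pow).comp (Primrec.const 2) Primrec.id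
  have htarget : Primrec (fun x : List Bool =>
      2 ^ (List.idxOf false x) + List.idxOf false x + 2) :=
    Primrec.nat_add.comp (Primrec.nat_add.comp (hpow.comp hlead) hlead) (Primrec.const 2)
  have hpred : PrimrecPred (fun x : List Bool =>
      x.length = 2 ^ (List.idxOf false x) + List.idxOf false x + 2) :=
    Primrec.eq.comp Primrec.list_length htarget
  have h : Primrec (fun x : List Bool =>
      (if x.length = 2 ^ (List.idxOf false x) + List.idxOf false x + 2 then some x else none :
        Option (List Bool))) :=
    Primrec.ite hpred (Primrec.option_some.comp Primrec.id) (Primrec.const none)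
  exact Computable.ofOption h.to_comp

private lemma mem_dom_Cm {x : List Bool} :
    x ∈ dom Cm ↔ x.length = 2 ^ (List.idxOf false x) + List.idxOf false x + 2 := by
  simp only [dom, Cm, Set.mem_setOf_eq]
  split <;> simp_all

private lemma Cm_eq {x : List Bool} (h : x ∈ dom Cm) : Cm x = Part.some x := by
  rw [mem_dom_Cm] at h
  simp [Cm, h]

private lemma Cm_selfDelim : SelfDelim Cm := by
  intro p hp q hq hpq
  rw [mem_dom_Cm] at hp hq
  have hfp : false ∈ p := by
    by_contra hmem
    rw [List.idxOf_eq_length_iff.2 hmem] at hp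
    have : 1 ≤ 2 ^ p.length := Nat.one_le_two_pow
    omega
  obtain ⟨s, rfl⟩ := hpq
  rw [List.idxOf_append_of_mem hfp] at hq
  have hls : (p ++ s).length = p.length := hq.trans hp.symm
  have : s = [] := by
    simp at hls
    simpa using hls
  simp [this]

private lemma prefix_total {α : Type*} {l1 l2 l3 : List α} (h1 : l1 <+: l3) (h2 : l2 <+: l3) :
    l1 <+: l2 ∨ l2 <+: l1 := by
  rcases le_total l1.length l2.length with h | h
  · left
    rw [List.prefix_iff_eq_take.1 h1, List.prefix_iff_eq_take.1 h2]
    exact List.take_isPrefix_take.2 (Or.inl h)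
  · right
    rw [List.prefix_iff_eq_take.1 h1, List.prefix_iff_eq_take.1 h2]
    exact List.take_isPrefix_take.2 (Or.inl h)

/-- The domain of a universal self-delimiting Turing machine cannot consist
only of strings whose lengths are integer powers of two. -/
theorem stmt_2 (U : List Bool →. List Bool) (hU : Partrec U) (huniv : UnivSD U) :
    ¬ (∀ p ∈ dom U, ∃ k : ℕ, p.length = 2 ^ k) := by
  intro hpowdom
  obtain ⟨hsd, hun⟩ := huniv
  obtain ⟨c, hc⟩ := hun Cm Cm_partrec Cm_selfDelim
  set t : ℕ := c + 4 with ht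
  have hbound : 2 ^ t + t + 2 + c < 2 ^ (t + 1) := by
    rw [ht]
    have h1 : c < 2 ^ c := Nat.lt_two_pow_self (n := c)
    have h2 : 2 ^ (c + 4 + 1) = 32 * 2 ^ c := by ring
    have h3 : 2 ^ (c + 4) = 16 * 2 ^ c := by ring
    omega
  -- the inputs
  set xw : (Fin (2 ^ t + 1) → Bool) → List Bool :=
    fun w => List.replicate t true ++ false :: List.ofFn w with hxw
  have hlead : ∀ w, List.idxOf false (xw w) = t := by
    intro w
    rw [hxw]
    rw [List.idxOf_append_of_notMem (by simp), List.idxOf_cons_self]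
    simp
  have hlen : ∀ w, (xw w).length = 2 ^ t + t + 2 := by
    intro w
    simp [hxw]
    omega
  have hmem : ∀ w, xw w ∈ dom Cm := by
    intro w
    rw [mem_dom_Cm, hlead, hlen]
  choose p hplenraw hpU using fun w => hc (xw w) (hmem w)
  have hpU' : ∀ w, U (p w) = Part.some (xw w) := fun w => (hpU w).trans (Cm_eq (hmem w))
  have hpdom : ∀ w, p w ∈ dom U := by
    intro w
    show (U (p w)).Dom
    rw [hpU' w]
    trivial
  have hplen : ∀ w, (p w).length ≤ 2 ^ t := by
    intro w
    obtain ⟨k, hk⟩ := hpowdom (p w) (hpdom w)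
    have h1 : (p w).length ≤ 2 ^ t + t + 2 + c := by
      have := hplenraw w
      rw [hlen w] at this
      exact this
    have h2 : 2 ^ k < 2 ^ (t + 1) := by omega
    have h3 : k < t + 1 := by
      exact (Nat.pow_lt_pow_iff_right (by norm_num)).1 h2
    rw [hk]
    exact Nat.pow_le_pow_right (by norm_num) (by omega)
  -- padding
  set pad : (Fin (2 ^ t + 1) → Bool) → List Bool :=
    fun w => p w ++ List.replicate (2 ^ t - (p w).length) false with hpad
  have hpadlen : ∀ w, (pad w).length = 2 ^ t := by
    intro w
    simp [hpad]
    have := hplen w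
    omega
  have hpadinj : Function.Injective pad := by
    intro w1 w2 h
    have hpre1 : p w1 <+: pad w2 := by rw [← h]; exact List.prefix_append _ _
    have hpre2 : p w2 <+: pad w2 := List.prefix_append _ _
    have : p w1 = p w2 := by
      rcases prefix_total hpre1 hpre2 with hp | hp
      · exact hsd _ (hpdom w1) _ (hpdom w2) hp
      · exact (hsd _ (hpdom w2) _ (hpdom w1) hp).symm
    have hx : Part.some (xw w1) = Part.some (xw w2) := by
      rw [← hpU' w1, ← hpU' w2, this]
    have hxx : xw w1 = xw w2 := by
      simpa [Part.some_inj] using hx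
    rw [hxw] at hxx
    simp only [List.append_cancel_left_eq, List.cons.injEq, true_and] at hxx
    exact List.ofFn_injective hxx
  -- injection into shorter strings
  set F : (Fin (2 ^ t + 1) → Bool) → (Fin (2 ^ t) → Bool) :=
    fun w i => (pad w).getD i false with hF
  have hFinj : Function.Injective F := by
    intro w1 w2 h
    apply hpadinj
    apply List.ext_getElem (by rw [hpadlen w1, hpadlen w2])
    intro i h1 h2
    have hi : i < 2 ^ t := by rw [hpadlen w1] at h1; exact h1
    have := congrFun h ⟨i, hi⟩
    simp only [hF] at this
    rwa [List.getD_eq_getElem _ _ h1, List.getD_eq_getElem _ _ h2] at this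
  have hcard := Fintype.card_le_of_injective F hFinj
  simp [Fintype.card_fun] at hcard
  have : 2 ^ (2 ^ t) < 2 ^ (2 ^ t + 1) :=
    Nat.pow_lt_pow_right (by norm_num) (by omega)
  omega
end

section
/- For every universal self-delimiting Turing machine U, the strict inequalities 1 > Ω_U > ζ_U > Ω_U/2 > 0 hold. -/
open scoped ENNReal

def nuN (p : List Bool) : ℕ := p.foldl (fun n b => 2 * n + b.toNat) 1

@[simp] lemma nuN_nil : nuN [] = 1 := rfl

lemma nuN_concat (p : List Bool) (b : Bool) : nuN (p ++ [b]) = 2 * nuN p + b.toNat := by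
  simp [nuN, List.foldl_append]

lemma nuN_pos (p : List Bool) : 1 ≤ nuN p := by
  induction p using List.reverseRecOn with
  | nil => simp
  | append_singleton p b ih => rw [nuN_concat]; omega

lemma nuN_lb (p : List Bool) : 2 ^ p.length ≤ nuN p := by
  induction p using List.reverseRecOn with
  | nil => simp
  | append_singleton p b ih => rw [nuN_concat]; simp [pow_succ]; omega

lemma nuN_ub (p : List Bool) : nuN p < 2 ^ (p.length + 1) := by
  induction p using List.reverseRecOn with
  | nil => simp
  | append_singleton p b ih =>
      rw [nuN_concat]
      have : b.toNat ≤ 1 := Bool.toNat_le b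
      simp only [List.length_append, List.length_singleton]
      have h2 : 2 ^ (p.length + 1 + 1) = 2 * 2 ^ (p.length + 1) := by ring
      omega

lemma nuN_lb_strict (p : List Bool) (h : p ≠ List.replicate p.length false) :
    2 ^ p.length < nuN p := by
  induction p using List.reverseRecOn with
  | nil => simp at h
  | append_singleton p b ih =>
      rw [nuN_concat]
      rcases b with _ | _
      · have hp : p ≠ List.replicate p.length false := by
          intro hEq
          apply h
          rw [List.length_append, List.length_singleton, List.replicate_add]
          rw [hEq]; simp
        have := ih hp
        simp only [List.length_append, List.length_singleton]
        have h2 : 2 ^ (p.length + 1) = 2 * 2 ^ p.length := by ring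
        simp only [Bool.toNat_false]
        omega
      · have := nuN_lb p
        simp only [List.length_append, List.length_singleton, Bool.toNat_true]
        have h2 : 2 ^ (p.length + 1) = 2 * 2 ^ p.length := by ring
        omega

lemma bin_one : bin 1 = [] := by
  simp [bin, Nat.one_bits]

lemma bits_ne_nil {m : ℕ} (h : 1 ≤ m) : Nat.bits m ≠ [] := by
  rcases Nat.even_or_odd m with he | ho
  · obtain ⟨k, hk⟩ := he
    have hk' : m = 2 * k := by omega
    have hkpos : k ≠ 0 := by omega
    rw [hk', Nat.bit0_bits k hkpos]
    simp
  · obtain ⟨k, hk⟩ := ho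
    rw [hk, Nat.bit1_bits k]
    simp

lemma bin_step {n : ℕ} (h : 2 ≤ n) : bin n = bin (n / 2) ++ [n.bodd] := by
  have h2 : n / 2 ≠ 0 := by omega
  have hb : (Nat.bit n.bodd (n / 2)).bits = n.bodd :: (n / 2).bits :=
    Nat.bits_append_bit (n / 2) n.bodd (fun h0 => absurd h0 h2)
  have hd : Nat.bit n.bodd (n / 2) = n := by
    rw [← Nat.div2_val]; exact Nat.bit_bodd_div2 n
  rw [hd] at hb
  have hnil : (n / 2).bits ≠ [] := bits_ne_nil (by omega)
  unfold bin
  rw [hb]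
  simp only [List.reverse_cons]
  cases hrev : (n / 2).bits.reverse with
  | nil => exact absurd (by simpa using hrev) hnil
  | cons a t => simp

lemma nuN_bin : ∀ n : ℕ, 1 ≤ n → nuN (bin n) = n := by
  intro n
  induction n using Nat.strong_induction_on with
  | _ n ih =>
    intro h1
    rcases eq_or_lt_of_le h1 with h | h
    · rw [← h, bin_one]; rfl
    · have h2 : 2 ≤ n := h
      rw [bin_step h2, nuN_concat, ih (n / 2) (by omega) (by omega)]
      have := Nat.mod_two_of_bodd n
      omega

lemma bin_nuN (p : List Bool) : bin (nuN p) = p := by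
  induction p using List.reverseRecOn with
  | nil => rw [nuN_nil]; exact bin_one
  | append_singleton p b ih =>
      have h1 := nuN_pos p
      have hb : b.toNat ≤ 1 := Bool.toNat_le b
      have h2 : 2 ≤ nuN (p ++ [b]) := by rw [nuN_concat]; omega
      rw [bin_step h2]
      have hdiv : nuN (p ++ [b]) / 2 = nuN p := by rw [nuN_concat]; omega
      have hbodd : (nuN (p ++ [b])).bodd = b := by
        set m := nuN (p ++ [b]) with hmdef
        have hm2 : m = 2 * nuN p + b.toNat := by rw [hmdef, nuN_concat]
        have hm := Nat.mod_two_of_bodd m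
        cases b <;> cases hbo : m.bodd <;> simp only [hbo, Bool.toNat_false, Bool.toNat_true] at hm hm2 ⊢ <;> omega
      rw [hdiv, hbodd, ih]

-- Kraft inequality for finite prefix-free sets
lemma kraft_finset : ∀ (L : ℕ) (F : Finset (List Bool)),
    (∀ p ∈ F, ∀ q ∈ F, p <+: q → p = q) →
    (∀ p ∈ F, p.length ≤ L) →
    ∑ p ∈ F, (2 : ℝ≥0∞)⁻¹ ^ p.length ≤ 1 := by
  intro L
  induction L with
  | zero =>
      intro F hpf hlen
      have hsub : F ⊆ {[]} := by
        intro p hp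
        simp only [Finset.mem_singleton]
        exact List.eq_nil_of_length_eq_zero (Nat.le_zero.1 (hlen p hp))
      calc ∑ p ∈ F, (2 : ℝ≥0∞)⁻¹ ^ p.length ≤ ∑ p ∈ ({[]} : Finset (List Bool)), (2 : ℝ≥0∞)⁻¹ ^ p.length :=
            Finset.sum_le_sum_of_subset hsub
        _ = 1 := by simp
  | succ L ih =>
      intro F hpf hlen
      by_cases hnil : [] ∈ F
      · have hsub : F ⊆ {[]} := by
          intro p hp
          simp only [Finset.mem_singleton]
          exact (hpf [] hnil p hp (List.nil_prefix)).symm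
        calc ∑ p ∈ F, (2 : ℝ≥0∞)⁻¹ ^ p.length
            ≤ ∑ p ∈ ({[]} : Finset (List Bool)), (2 : ℝ≥0∞)⁻¹ ^ p.length :=
              Finset.sum_le_sum_of_subset hsub
          _ = 1 := by simp
      · classical
        have key : ∀ b : Bool,
            ∑ p ∈ F.filter (fun p => p.headI = b), (2 : ℝ≥0∞)⁻¹ ^ p.length ≤ 2⁻¹ := by
          intro b
          set Fb := F.filter (fun p => p.headI = b) with hFb
          have hne : ∀ p ∈ Fb, p ≠ [] := by
            intro p hp hpe
            exact hnil (hpe ▸ (Finset.mem_filter.1 hp).1)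
          have hinj : ∀ x ∈ Fb, ∀ y ∈ Fb, x.tail = y.tail → x = y := by
            intro x hx y hy hxy
            obtain ⟨a, xt, rfl⟩ := List.exists_cons_of_ne_nil (hne x hx)
            obtain ⟨a', yt, rfl⟩ := List.exists_cons_of_ne_nil (hne y hy)
            have hxh : a = b := by simpa using (Finset.mem_filter.1 hx).2
            have hyh : a' = b := by simpa using (Finset.mem_filter.1 hy).2
            simp only [List.tail_cons] at hxy
            rw [hxh, hyh, hxy]
          have hsum : ∑ p ∈ Fb, (2 : ℝ≥0∞)⁻¹ ^ p.length
              = ∑ t ∈ Fb.image List.tail, (2 : ℝ≥0∞)⁻¹ ^ (t.length + 1) := by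
            rw [Finset.sum_image hinj]
            apply Finset.sum_congr rfl
            intro p hp
            obtain ⟨a, xt, rfl⟩ := List.exists_cons_of_ne_nil (hne p hp)
            simp
          have hpf' : ∀ p ∈ Fb.image List.tail, ∀ q ∈ Fb.image List.tail, p <+: q → p = q := by
            intro t1 h1 t2 h2 hpre
            obtain ⟨p1, hp1, rfl⟩ := Finset.mem_image.1 h1
            obtain ⟨p2, hp2, rfl⟩ := Finset.mem_image.1 h2
            obtain ⟨a1, xt1, rfl⟩ := List.exists_cons_of_ne_nil (hne p1 hp1)
            obtain ⟨a2, xt2, rfl⟩ := List.exists_cons_of_ne_nil (hne p2 hp2)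
            have h1h : a1 = b := by simpa using (Finset.mem_filter.1 hp1).2
            have h2h : a2 = b := by simpa using (Finset.mem_filter.1 hp2).2
            simp only [List.tail_cons] at hpre ⊢
            have : a1 :: xt1 <+: a2 :: xt2 := by
              rw [List.cons_prefix_cons]; exact ⟨h1h.trans h2h.symm, hpre⟩
            have := hpf _ (Finset.mem_filter.1 hp1).1 _ (Finset.mem_filter.1 hp2).1 this
            exact ((List.cons_eq_cons).1 this).2
          have hlen' : ∀ p ∈ Fb.image List.tail, p.length ≤ L := by
            intro t ht
            obtain ⟨p, hp, rfl⟩ := Finset.mem_image.1 ht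
            obtain ⟨a, xt, rfl⟩ := List.exists_cons_of_ne_nil (hne p hp)
            have := hlen _ (Finset.mem_filter.1 hp).1
            simp only [List.tail_cons]
            simp only [List.length_cons] at this
            omega
          calc ∑ p ∈ Fb, (2 : ℝ≥0∞)⁻¹ ^ p.length
              = ∑ t ∈ Fb.image List.tail, (2 : ℝ≥0∞)⁻¹ ^ (t.length + 1) := hsum
            _ = 2⁻¹ * ∑ t ∈ Fb.image List.tail, (2 : ℝ≥0∞)⁻¹ ^ t.length := by
                rw [Finset.mul_sum]
                exact Finset.sum_congr rfl fun t _ => by ring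
            _ ≤ 2⁻¹ * 1 := by
                exact mul_le_mul_right (ih _ hpf' hlen') _
            _ = 2⁻¹ := mul_one _
        have hsplit := Finset.sum_filter_add_sum_filter_not F (fun p => p.headI = true)
          (fun p => (2 : ℝ≥0∞)⁻¹ ^ p.length)
        have hfalse : F.filter (fun p => ¬ p.headI = true) = F.filter (fun p => p.headI = false) := by
          apply Finset.filter_congr
          intro p _
          simp [Bool.not_eq_true]
        rw [← hsplit, hfalse]
        calc ∑ p ∈ F.filter (fun p => p.headI = true), (2 : ℝ≥0∞)⁻¹ ^ p.length
              + ∑ p ∈ F.filter (fun p => p.headI = false), (2 : ℝ≥0∞)⁻¹ ^ p.length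
            ≤ 2⁻¹ + 2⁻¹ := add_le_add (key true) (key false)
          _ = 1 := ENNReal.inv_two_add_inv_two


lemma kraft_tsum {S : Set (List Bool)} (hpf : ∀ p ∈ S, ∀ q ∈ S, p <+: q → p = q) :
    ∑' p : S, (2 : ℝ≥0∞)⁻¹ ^ (p : List Bool).length ≤ 1 := by
  classical
  rw [ENNReal.tsum_eq_iSup_sum]
  apply iSup_le
  intro s
  set F := s.image (Subtype.val : S → List Bool) with hF
  have hinj : ∀ x ∈ s, ∀ y ∈ s, (x : List Bool) = y → x = y := fun x _ y _ h => Subtype.ext h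
  have hsum : ∑ p ∈ s, (2 : ℝ≥0∞)⁻¹ ^ (p : List Bool).length
      = ∑ p ∈ F, (2 : ℝ≥0∞)⁻¹ ^ p.length :=
    (Finset.sum_image (f := fun p : List Bool => (2 : ℝ≥0∞)⁻¹ ^ p.length) hinj).symm
  rw [hsum]
  apply kraft_finset (F.sup List.length) F
  · intro p hp q hq hpq
    obtain ⟨p', _, rfl⟩ := Finset.mem_image.1 hp
    obtain ⟨q', _, rfl⟩ := Finset.mem_image.1 hq
    exact hpf _ p'.2 _ q'.2 hpq
  · intro p hp
    exact Finset.le_sup (f := List.length) hp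

lemma kraft_tsum_extra {S : Set (List Bool)} (hpf : ∀ p ∈ S, ∀ q ∈ S, p <+: q → p = q)
    {q : List Bool} (hq : ∀ p ∈ S, ¬ p <+: q ∧ ¬ q <+: p) :
    ∑' p : S, (2 : ℝ≥0∞)⁻¹ ^ (p : List Bool).length ≤ 1 - 2⁻¹ ^ q.length := by
  classical
  rw [ENNReal.tsum_eq_iSup_sum]
  apply iSup_le
  intro s
  set F := s.image (Subtype.val : S → List Bool) with hF
  have hinj : ∀ x ∈ s, ∀ y ∈ s, (x : List Bool) = y → x = y := fun x _ y _ h => Subtype.ext h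
  have hsum : ∑ p ∈ s, (2 : ℝ≥0∞)⁻¹ ^ (p : List Bool).length
      = ∑ p ∈ F, (2 : ℝ≥0∞)⁻¹ ^ p.length :=
    (Finset.sum_image (f := fun p : List Bool => (2 : ℝ≥0∞)⁻¹ ^ p.length) hinj).symm
  have hFS : ∀ p ∈ F, p ∈ S := by
    intro p hp
    obtain ⟨p', _, rfl⟩ := Finset.mem_image.1 hp
    exact p'.2
  have hqF : q ∉ F := by
    intro hmem
    exact (hq q (hFS q hmem)).1 (List.prefix_refl q)
  have hkraft := kraft_finset ((insert q F).sup List.length) (insert q F) ?_ ?_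
  · rw [Finset.sum_insert hqF] at hkraft
    rw [hsum]
    exact ENNReal.le_sub_of_add_le_right (by simp) (by rwa [add_comm] at hkraft)
  · intro p1 h1 p2 h2 h12
    rcases Finset.mem_insert.1 h1 with rfl | h1' <;> rcases Finset.mem_insert.1 h2 with rfl | h2'
    · rfl
    · exact absurd h12 (hq p2 (hFS p2 h2')).2
    · exact absurd h12 (hq p1 (hFS p1 h1')).1
    · exact hpf _ (hFS p1 h1') _ (hFS p2 h2') h12
  · intro p hp
    exact Finset.le_sup (f := List.length) hp

lemma pow_cast_eq (l : ℕ) : (2 : ℝ≥0∞)⁻¹ ^ l = (((2 ^ l : ℕ) : ℝ≥0∞))⁻¹ := by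
  rw [← ENNReal.inv_pow]
  congr 1
  push_cast
  rfl

lemma term_le (p : List Bool) :
    ((nuN p : ℕ) : ℝ≥0∞)⁻¹ ≤ (2 : ℝ≥0∞)⁻¹ ^ p.length := by
  rw [pow_cast_eq]
  exact ENNReal.inv_le_inv.2 (by exact_mod_cast nuN_lb p)

lemma term_lt (p : List Bool) (h : p ≠ List.replicate p.length false) :
    ((nuN p : ℕ) : ℝ≥0∞)⁻¹ < (2 : ℝ≥0∞)⁻¹ ^ p.length := by
  rw [pow_cast_eq]
  exact ENNReal.inv_lt_inv.2 (by exact_mod_cast nuN_lb_strict p h)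

lemma term_gt (p : List Bool) :
    (2 : ℝ≥0∞)⁻¹ ^ (p.length + 1) < ((nuN p : ℕ) : ℝ≥0∞)⁻¹ := by
  rw [pow_cast_eq]
  exact ENNReal.inv_lt_inv.2 (by exact_mod_cast nuN_ub p)

lemma zeta_eq (U : List Bool →. List Bool) :
    zeta U = ∑' p : dom U, ((nuN (p : List Bool) : ℕ) : ℝ≥0∞)⁻¹ := by
  have := Equiv.tsum_eq
    (⟨fun p => ⟨nuN (p : List Bool), nuN_pos _, by rw [bin_nuN]; exact p.2⟩,
      fun n => ⟨bin (n : ℕ), n.2.2⟩,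
      fun p => Subtype.ext (bin_nuN _),
      fun n => Subtype.ext (nuN_bin _ n.2.1)⟩ : ↥(dom U) ≃ ↥(Ups (dom U)))
    (fun n : ↥(Ups (dom U)) => ((n : ℕ) : ℝ≥0∞)⁻¹)
  rw [zeta, ← this]
  rfl

-- ## computability helpers

lemma take_eq_filterMap (l : List Bool) (n : ℕ) :
    l.take n = (List.range n).filterMap (fun j => l[j]?) := by
  induction n with
  | zero => simp
  | succ n ih =>
      rw [List.range_succ, List.filterMap_append, ← ih, List.take_succ]
      cases h : l[n]? <;> simp [h]

lemma primrec_take : Primrec₂ (fun (l : List Bool) (n : ℕ) => l.take n) := by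
  have h : Primrec fun a : List Bool × ℕ => (List.range a.2).filterMap (fun j => a.1[j]?) :=
    Primrec.listFilterMap (Primrec.list_range.comp Primrec.snd)
      (Primrec.list_getElem?.comp (Primrec.fst.comp Primrec.fst) Primrec.snd)
  exact Primrec₂.mk (h.of_eq fun a => (take_eq_filterMap a.1 a.2).symm)

lemma primrec_replicate_false : Primrec (fun n => List.replicate n false) := by
  have h : Primrec fun n : ℕ => (List.range n).map (fun _ => false) :=
    Primrec.list_map Primrec.list_range (Primrec₂.const false)
  apply h.of_eq
  intro n
  apply List.eq_replicate_iff.2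
  refine ⟨by simp, ?_⟩
  intro b hb
  simp at hb
  exact hb.2.symm ▸ rfl

-- ## generic: re predicates via a computable semi-decision bool test

lemma repred_of_bool_test {p : List Bool → Prop} {t : List Bool → ℕ → Bool}
    (ht : Computable₂ t) (hiff : ∀ a, p a ↔ ∃ n, t a n = true) : REPred p := by
  have hpart : Partrec fun a : List Bool =>
      (Nat.rfind (fun n => Part.some (t a n))).map (fun _ => ()) :=
    (Partrec.rfind ht.partrec₂).map ((Computable.const ()).comp Computable.fst).to₂
  apply hpart.of_eq
  intro a
  apply Part.ext
  intro u
  cases u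
  rw [Part.mem_map_iff, Part.mem_assert_iff]
  constructor
  · rintro ⟨n, hn, -⟩
    have := Nat.rfind_spec hn
    rw [Part.mem_some_iff] at this
    exact ⟨(hiff a).2 ⟨n, this.symm⟩, Part.mem_some _⟩
  · rintro ⟨ha, -⟩
    obtain ⟨n, hn⟩ := (hiff a).1 ha
    obtain ⟨m, hm, -⟩ := Nat.rfind_min' (p := fun n => t a n) hn
    exact ⟨m, hm, rfl⟩

-- ## a computable surjection ℕ → List Bool

def ofN : ℕ → List Bool := fun n => (Encodable.decode (α := List Bool) n).getD []

lemma ofN_encode (p : List Bool) : ofN (Encodable.encode p) = p := by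
  simp [ofN, Encodable.encodek]

lemma ofN_primrec : Primrec ofN :=
  Primrec.option_getD.comp Primrec.decode (Primrec.const [])

-- ## the encode bound

def NB : ℕ → ℕ := fun m => Nat.rec 0 (fun _ ih => Nat.pair 1 ih + 1) m

lemma NB_primrec : Primrec NB :=
  Primrec.nat_rec₁ 0
    (Primrec₂.mk (Primrec.succ.comp
      (Primrec₂.natPair.comp (Primrec.const 1) Primrec.snd)))

lemma pair_le_pair {a a' b b' : ℕ} (ha : a ≤ a') (hb : b ≤ b') :
    Nat.pair a b ≤ Nat.pair a' b' := by
  unfold Nat.pair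
  split_ifs with h1 h2 h2
  · nlinarith
  · nlinarith
  · nlinarith
  · nlinarith

lemma encode_bound : ∀ (m : ℕ) (p : List Bool), p.length ≤ m → Encodable.encode p ≤ NB m := by
  intro m
  induction m with
  | zero =>
      intro p hp
      rw [List.eq_nil_of_length_eq_zero (Nat.le_zero.1 hp)]
      simp [NB]
  | succ m ih =>
      intro p hp
      cases p with
      | nil => simp
      | cons b l =>
          rw [Encodable.encode_list_cons]
          show Nat.pair (Encodable.encode b) (Encodable.encode l) + 1 ≤ Nat.pair 1 (NB m) + 1
          have hb : Encodable.encode b ≤ 1 := by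
            cases b
            · exact le_of_eq_of_le (by rfl) (Nat.zero_le 1)
            · exact le_of_eq (by rfl)
          have hl : Encodable.encode l ≤ NB m := by
            apply ih l
            simp only [List.length_cons] at hp
            omega
          exact Nat.succ_le_succ (pair_le_pair hb hl)

lemma flatten_len_le (L : List (List Bool)) (z : List Bool) (h : z ∈ L) :
    z.length ≤ L.flatten.length := by
  induction L with
  | nil => cases h
  | cons a t ih =>
      rcases List.mem_cons.1 h with rfl | h'
      · simp
      · simp only [List.flatten_cons, List.length_append]
        exact le_add_left (ih h')

lemma main_contra (U : List Bool →. List Bool) (hU : Partrec U) (hsd : SelfDelim U)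
    (hu : ∀ C : List Bool →. List Bool, Partrec C → SelfDelim C →
      ∃ c : ℕ, ∀ x ∈ dom C, ∃ p : List Bool, p.length ≤ x.length + c ∧ U p = C x)
    (hcomp : ∀ q : List Bool, ∃ p ∈ dom U, p <+: q ∨ q <+: p) : False := by
  classical
  -- a code for U
  obtain ⟨cU, hcU⟩ := Nat.Partrec.Code.exists_code.1 hU
  set halts : ℕ → List Bool → Bool :=
    fun s p => (Nat.Partrec.Code.evaln s cU (Encodable.encode p)).isSome with hhalts
  have hUeval : ∀ p : List Bool, cU.eval (Encodable.encode p) = (U p).map Encodable.encode := by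
    intro p
    rw [hcU]
    simp [Encodable.encodek]
  have domiff : ∀ p : List Bool, (U p).Dom ↔ ∃ s, halts s p = true := by
    intro p
    constructor
    · intro h
      have hx : Encodable.encode ((U p).get h) ∈ cU.eval (Encodable.encode p) := by
        rw [hUeval]
        exact Part.mem_map _ (Part.get_mem h)
      obtain ⟨s, hs⟩ := Nat.Partrec.Code.evaln_complete.1 hx
      refine ⟨s, ?_⟩
      rw [hhalts]
      simp only [Option.isSome_iff_exists]
      exact ⟨_, hs⟩
    · rintro ⟨s, hs⟩
      rw [hhalts] at hs
      simp only [Option.isSome_iff_exists] at hs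
      obtain ⟨x, hx⟩ := hs
      have hmem : x ∈ cU.eval (Encodable.encode p) :=
        Nat.Partrec.Code.evaln_complete.2 ⟨s, hx⟩
      rw [hUeval] at hmem
      obtain ⟨y, hy, -⟩ := (Part.mem_map_iff _).1 hmem
      exact Part.dom_iff_mem.2 ⟨y, hy⟩
  have halts_comp : Computable₂ halts := by
    apply Primrec₂.to_comp
    apply Primrec₂.mk
    have h : Primrec fun a : ℕ × List Bool =>
        Nat.Partrec.Code.evaln a.1 cU (Encodable.encode a.2) :=
      Nat.Partrec.Code.primrec_evaln.comp
        ((Primrec.fst.pair (Primrec.const cU)).pair (Primrec.encode.comp Primrec.snd))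
    exact Primrec.option_isSome.comp h
  -- the two r.e. predicates
  set A : List Bool → Prop := fun q => ∃ i, (U (q.take i)).Dom with hA
  set B : List Bool → Prop := fun q => ∃ r, q <+: r ∧ q ≠ r ∧ (U r).Dom with hB
  have hApred : REPred A := by
    apply repred_of_bool_test (t := fun q n => halts n.unpair.2 (q.take n.unpair.1))
    · apply halts_comp.comp
      · exact (Primrec.snd.comp (Primrec.unpair.comp Primrec.snd)).to_comp
      · exact (primrec_take.comp Primrec.fst
          (Primrec.fst.comp (Primrec.unpair.comp Primrec.snd))).to_comp
    · intro q
      rw [hA]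
      constructor
      · rintro ⟨i, hi⟩
        obtain ⟨s, hs⟩ := (domiff _).1 hi
        exact ⟨Nat.pair i s, by simp [Nat.unpair_pair, hs]⟩
      · rintro ⟨n, hn⟩
        exact ⟨n.unpair.1, (domiff _).2 ⟨n.unpair.2, hn⟩⟩
  have hBpred : REPred B := by
    apply repred_of_bool_test (t := fun q n =>
      (decide ((ofN n.unpair.1).take q.length = q)) &&
      (!decide (ofN n.unpair.1 = q)) &&
      halts n.unpair.2 (ofN n.unpair.1))
    · have hr : Primrec fun a : List Bool × ℕ => ofN a.2.unpair.1 :=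
        ofN_primrec.comp (Primrec.fst.comp (Primrec.unpair.comp Primrec.snd))
      have h1 : Primrec fun a : List Bool × ℕ =>
          decide ((ofN a.2.unpair.1).take a.1.length = a.1) :=
        (Primrec.eq.comp (primrec_take.comp hr (Primrec.list_length.comp Primrec.fst))
          Primrec.fst).decide
      have h2 : Primrec fun a : List Bool × ℕ =>
          (!decide (ofN a.2.unpair.1 = a.1)) :=
        Primrec.not.comp (Primrec.eq.comp hr Primrec.fst).decide
      have h3 : Computable fun a : List Bool × ℕ =>
          halts a.2.unpair.2 (ofN a.2.unpair.1) :=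
        halts_comp.comp ((Primrec.snd.comp (Primrec.unpair.comp Primrec.snd)).to_comp)
          hr.to_comp
      exact Computable₂.mk ((Primrec.and.to_comp.comp
        ((Primrec.and.comp h1 h2).to_comp) h3))
    · intro q
      rw [hB]
      constructor
      · rintro ⟨r, hqr, hne, hrdom⟩
        obtain ⟨s, hs⟩ := (domiff _).1 hrdom
        refine ⟨Nat.pair (Encodable.encode r) s, ?_⟩
        simp only [Nat.unpair_pair, ofN_encode]
        rw [Bool.and_eq_true, Bool.and_eq_true]
        refine ⟨⟨?_, ?_⟩, hs⟩
        · rw [decide_eq_true_iff]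
          exact (List.prefix_iff_eq_take.1 hqr).symm
        · simp [hne.symm]
      · rintro ⟨n, hn⟩
        rw [Bool.and_eq_true, Bool.and_eq_true] at hn
        obtain ⟨⟨h1, h2⟩, h3⟩ := hn
        refine ⟨ofN n.unpair.1, ?_, ?_, (domiff _).2 ⟨_, h3⟩⟩
        · rw [List.prefix_iff_eq_take]
          exact (decide_eq_true_iff.1 h1).symm
        · intro h
          rw [← h] at h2
          simp at h2
  -- A and B are complementary, so A is decidable
  have hnotA : ∀ q, B q ↔ ¬ A q := by
    intro q
    constructor
    · rintro ⟨r, hqr, hne, hrdom⟩ ⟨i, hi⟩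
      have hpre : q.take i <+: r := (List.take_prefix i q).trans hqr
      have heq : q.take i = r := hsd _ hi _ hrdom hpre
      have hlen1 : r.length ≤ q.length := by
        rw [← heq, List.length_take]
        exact min_le_right _ _
      exact hne (hqr.eq_of_length (le_antisymm hqr.length_le hlen1))
    · intro hna
      obtain ⟨p, hp, hor⟩ := hcomp q
      rcases hor with hpq | hqp
      · exfalso
        apply hna
        refine ⟨p.length, ?_⟩
        rw [← List.prefix_iff_eq_take.1 hpq]
        exact hp
      · refine ⟨p, hqp, ?_, hp⟩
        intro h
        apply hna
        refine ⟨q.length, ?_⟩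
        rw [List.take_length]
        rw [h]
        exact hp
  have hAcomp : ComputablePred A := by
    haveI : DecidablePred A := Classical.decPred _
    exact ComputablePred.computable_iff_re_compl_re.2 ⟨hApred, hBpred.of_eq hnotA⟩
  obtain ⟨instA, hχ⟩ := hAcomp
  set χ : List Bool → Bool := fun q => @decide (A q) (instA q) with hχdef
  have hχspec : ∀ q, χ q = true ↔ A q := by
    intro q
    rw [hχdef]
    exact decide_eq_true_iff
  have hχc : Computable χ := hχ
  -- the characteristic function of dom U
  set δ : List Bool → Bool :=
    fun q => χ q && ((decide (q = [])) || !(χ (q.take (q.length - 1)))) with hδdef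
  have hδcomp : Computable δ := by
    have h2 : Computable fun q : List Bool => χ (q.take (q.length - 1)) :=
      hχc.comp ((primrec_take.comp Primrec.id
        (Primrec.pred.comp Primrec.list_length)).to_comp)
    have h3 : Computable fun q : List Bool =>
        ((decide (q = [])) || !(χ (q.take (q.length - 1)))) :=
      Primrec.or.to_comp.comp
        ((Primrec.eq.comp Primrec.id (Primrec.const [])).decide.to_comp)
        (Primrec.not.to_comp.comp h2)
    exact Primrec.and.to_comp.comp hχc h3
  have hδspec : ∀ q, δ q = true ↔ (U q).Dom := by
    intro q
    rw [hδdef]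
    simp only
    by_cases hq : q = []
    · subst hq
      constructor
      · intro h
        rw [Bool.and_eq_true] at h
        obtain ⟨i, hi⟩ := (hχspec []).1 h.1
        simpa using hi
      · intro h
        have h1 : χ [] = true := (hχspec []).2 ⟨0, by simpa using h⟩
        rw [h1]
        simp
    · constructor
      · intro h
        rw [Bool.and_eq_true] at h
        obtain ⟨h1, h2⟩ := h
        rw [Bool.or_eq_true] at h2
        rcases h2 with h2 | h2
        · exact absurd (of_decide_eq_true h2) hq
        · have hnshort : ¬ A (q.take (q.length - 1)) := by
            intro hAz
            rw [(hχspec _).2 hAz] at h2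
            simp at h2
          obtain ⟨i, hi⟩ := (hχspec q).1 h1
          rcases le_or_gt q.length i with hle | hlt
          · rwa [List.take_of_length_le hle] at hi
          · exfalso
            apply hnshort
            refine ⟨i, ?_⟩
            rw [List.take_take]
            have hmin : min i (q.length - 1) = i := min_eq_left (by omega)
            rw [hmin]
            exact hi
      · intro h
        have hqpos : 1 ≤ q.length := List.length_pos_iff.2 hq
        have h1 : χ q = true := (hχspec q).2 ⟨q.length, by rwa [List.take_length]⟩
        have h2 : ¬ A (q.take (q.length - 1)) := by
          rintro ⟨i, hi⟩
          rw [List.take_take] at hi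
          have hjlt : min i (q.length - 1) < q.length := by
            have := min_le_right i (q.length - 1)
            omega
          have heq := hsd _ hi _ h (List.take_prefix _ _)
          have hlen : (q.take (min i (q.length - 1))).length = q.length := by rw [heq]
          rw [List.length_take] at hlen
          omega
        have h2' : χ (q.take (q.length - 1)) = false := by
          cases hc : χ (q.take (q.length - 1))
          · rfl
          · exact absurd ((hχspec _).1 hc) h2
        rw [h1, h2']
        simp
  -- a total evaluation function for U
  set E : List Bool → List Bool :=
    fun p => if h : (U p).Dom then (U p).get h else [] with hEdef
  have hEspec : ∀ p, (U p).Dom → U p = Part.some (E p) := by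
    intro p h
    rw [hEdef]
    simp only
    rw [dif_pos h, Part.some_get]
  have hEcomp : Computable E := by
    have hpart : Partrec fun p : List Bool => (bif δ p then U p else Part.some []) :=
      Partrec.cond hδcomp hU ((Computable.const ([] : List Bool)).partrec)
    apply hpart.of_eq_tot
    intro p
    cases hd : δ p
    · have hnd : ¬ (U p).Dom := fun hdd => by rw [(hδspec p).2 hdd] at hd; cases hd
      rw [hEdef]
      simp only
      rw [dif_neg hnd, Bool.cond_false]
      exact Part.mem_some _
    · have hdd : (U p).Dom := (hδspec p).1 hd
      rw [hEdef]
      simp only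
      rw [dif_pos hdd, Bool.cond_true]
      exact Part.get_mem hdd
  -- enumeration of all outputs of short programs
  set Tl : ℕ → List (List Bool) := fun M => (List.range M).map (fun j => E (ofN j)) with hTl
  have hTlcomp : Computable Tl := by
    have h : Computable
        (fun M => Nat.rec [] (fun y IH => IH ++ [E (ofN y)]) M : ℕ → List (List Bool)) := by
      exact Computable.nat_rec (f := @id ℕ) (g := fun _ => ([] : List (List Bool)))
        (h := fun _ p => p.2 ++ [E (ofN p.1)]) Computable.id (Computable.const [])
        (Computable₂.mk (Computable.list_concat.comp
          (Computable.snd.comp Computable.snd)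
          (hEcomp.comp (ofN_primrec.to_comp.comp (Computable.fst.comp Computable.snd)))))
    apply h.of_eq
    intro M
    rw [hTl]
    simp only
    induction M with
    | zero => simp
    | succ M ih =>
        show (Nat.rec [] (fun y IH => IH ++ [E (ofN y)]) M : List (List Bool))
          ++ [E (ofN M)] = _
        rw [ih, List.range_succ]
        simp
  set SS : ℕ → List (List Bool) := fun k => Tl (NB (2 * (k + 1)) + 1) with hSS
  have hSScomp : Computable SS :=
    hTlcomp.comp (Primrec.succ.comp (NB_primrec.comp
      (Primrec.nat_mul.comp (Primrec.const 2) Primrec.succ))).to_comp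
  set yf : ℕ → List Bool := fun k => false :: (SS k).flatten with hyf
  have hyfcomp : Computable yf :=
    Computable.list_cons.comp (Computable.const false)
      (Primrec.list_flatten.to_comp.comp hSScomp)
  have hynotin : ∀ k, yf k ∉ SS k := by
    intro k hmem
    have h1 := flatten_len_le _ _ hmem
    have hlen : (yf k).length = (SS k).flatten.length + 1 := by rw [hyf]; simp
    omega
  have hcov : ∀ (k : ℕ) (p : List Bool), p.length ≤ 2 * (k + 1) → E p ∈ SS k := by
    intro k p hlen
    rw [hSS]
    simp only
    rw [hTl]
    simp only
    apply List.mem_map.2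
    refine ⟨Encodable.encode p, ?_, by rw [ofN_encode]⟩
    apply List.mem_range.2
    exact Nat.lt_succ_of_le (encode_bound _ p hlen)
  -- the diagonal machine
  set CC : List Bool →. List Bool := fun x =>
    bif decide (x = List.replicate (x.length - 1) false ++ [true])
    then Part.some (yf (x.length - 1)) else Part.none with hCC
  have hCCpart : Partrec CC := by
    apply Partrec.cond
    · exact (Primrec.eq.comp Primrec.id
        (Primrec.list_append.comp
          (primrec_replicate_false.comp (Primrec.pred.comp Primrec.list_length))
          (Primrec.const [true]))).decide.to_comp
    · exact (hyfcomp.comp (Computable.pred.comp Computable.list_length)).partrec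
    · exact Partrec.none
  have hCCdom : ∀ x, x ∈ dom CC ↔ x = List.replicate (x.length - 1) false ++ [true] := by
    intro x
    by_cases hx : x = List.replicate (x.length - 1) false ++ [true]
    · have hd : decide (x = List.replicate (x.length - 1) false ++ [true]) = true :=
        decide_eq_true hx
      show (CC x).Dom ↔ _
      rw [hCC]
      simp only
      rw [hd, Bool.cond_true]
      exact iff_of_true trivial hx
    · have hd : decide (x = List.replicate (x.length - 1) false ++ [true]) = false :=
        decide_eq_false hx
      show (CC x).Dom ↔ _
      rw [hCC]
      simp only
      rw [hd, Bool.cond_false]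
      exact iff_of_false (fun h => h) hx
  have hCCval : ∀ x, x = List.replicate (x.length - 1) false ++ [true] →
      CC x = Part.some (yf (x.length - 1)) := by
    intro x hx
    rw [hCC]
    simp only
    rw [decide_eq_true hx, Bool.cond_true]
  have hCCsd : SelfDelim CC := by
    intro p hp q hq hpq
    rw [hCCdom] at hp hq
    have hpl : p.length = (p.length - 1) + 1 := by
      conv_lhs => rw [hp]
      simp
    have hql : q.length = (q.length - 1) + 1 := by
      conv_lhs => rw [hq]
      simp
    have hlenle : p.length ≤ q.length := hpq.length_le
    rcases Nat.lt_or_ge (p.length - 1) (q.length - 1) with hab | hab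
    · exfalso
      rw [hp, hq] at hpq
      set m := p.length - 1 with hm
      set n := q.length - 1 with hn
      have hb1 : m < (List.replicate m false ++ [true]).length := by simp
      have h1 : (List.replicate m false ++ [true])[m]'hb1 = true :=
        List.getElem_concat_length (by simp) _
      have hb2 : m < (List.replicate n false).length := by simp; omega
      have h2 : (List.replicate n false ++ [true])[m]'(by simp; omega) = false := by
        rw [List.getElem_append_left hb2]
        exact List.getElem_replicate _
      have h3 := hpq.getElem hb1
      rw [h1, h2] at h3
      cases h3
    · have : p.length = q.length := by omega
      exact hpq.eq_of_length this
  -- the contradiction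
  obtain ⟨cst, hcst⟩ := hu CC hCCpart hCCsd
  set x := List.replicate cst false ++ [true] with hx
  have hxlen : x.length = cst + 1 := by rw [hx]; simp
  have hxform : x = List.replicate (x.length - 1) false ++ [true] := by
    rw [hxlen]
    simp [hx]
  obtain ⟨p, hplen, hUp⟩ := hcst x ((hCCdom x).2 hxform)
  have hCx : CC x = Part.some (yf cst) := by
    have h := hCCval x hxform
    rw [hxlen] at h
    simpa using h
  rw [hCx] at hUp
  have hpdom : (U p).Dom := by rw [hUp]; trivial
  have hEp : E p = yf cst := by
    have h := hEspec p hpdom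
    rw [hUp] at h
    exact (Part.some_inj.1 h).symm
  have hplen2 : p.length ≤ 2 * (cst + 1) := by
    rw [hxlen] at hplen
    omega
  have hfin := hcov cst p hplen2
  rw [hEp] at hfin
  exact hynotin cst hfin


lemma two_mem (U : List Bool →. List Bool)
    (hu : ∀ C : List Bool →. List Bool, Partrec C → SelfDelim C →
      ∃ c : ℕ, ∀ x ∈ dom C, ∃ p : List Bool, p.length ≤ x.length + c ∧ U p = C x) :
    ∃ p₀ p₁ : List Bool, p₀ ∈ dom U ∧ p₁ ∈ dom U ∧ p₀ ≠ p₁ := by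
  classical
  set C2 : List Bool →. List Bool := fun x => bif x.length == 1 then Part.some x else Part.none
    with hC2
  have hpart : Partrec C2 := by
    apply Partrec.cond
    · exact (Primrec.beq.comp Primrec.list_length (Primrec.const 1)).to_comp
    · exact Partrec.some
    · exact Partrec.none
  have hdom : ∀ x : List Bool, x ∈ dom C2 ↔ x.length = 1 := by
    intro x
    rcases hb : (x.length == 1) with _ | _
    · have hlen : ¬ x.length = 1 := by simpa using hb
      simp [dom, hC2, hb, hlen]
    · have hlen : x.length = 1 := by simpa using hb
      simp [dom, hC2, hb, hlen]
  have hval : ∀ x : List Bool, x.length = 1 → C2 x = Part.some x := by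
    intro x hx
    rw [hC2]
    show (bif x.length == 1 then Part.some x else Part.none) = Part.some x
    rw [hx]
    rfl
  have hsd2 : SelfDelim C2 := by
    intro p hp q hq hpq
    rw [hdom] at hp hq
    exact hpq.eq_of_length (hp.trans hq.symm)
  obtain ⟨c, hc⟩ := hu C2 hpart hsd2
  obtain ⟨p₀, _, hU0⟩ := hc [false] ((hdom [false]).2 rfl)
  obtain ⟨p₁, _, hU1⟩ := hc [true] ((hdom [true]).2 rfl)
  have hv0 : U p₀ = Part.some [false] := by rw [hU0]; exact hval _ rfl
  have hv1 : U p₁ = Part.some [true] := by rw [hU1]; exact hval _ rfl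
  refine ⟨p₀, p₁, ?_, ?_, ?_⟩
  · show (U p₀).Dom; rw [hv0]; trivial
  · show (U p₁).Dom; rw [hv1]; trivial
  · intro h
    rw [h, hv1] at hv0
    have := Part.some_inj.1 hv0
    simp at this

/-- For every universal self-delimiting Turing machine `U`,
`1 > Ω_U > ζ_U > Ω_U/2 > 0`. -/
theorem stmt_3 (U : List Bool →. List Bool) (hU : Partrec U) (huniv : UnivSD U) :
    1 > Omega U ∧ Omega U > zeta U ∧ zeta U > Omega U / 2 ∧ Omega U / 2 > 0 := by
  classical
  obtain ⟨hsd, hu⟩ := huniv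
  obtain ⟨p₀, p₁, hm₀, hm₁, hne⟩ := two_mem U hu
  have hΩ1 : Omega U ≤ 1 := kraft_tsum hsd
  -- the strict-inequality witness: an element of dom U that is not all-false
  have hstar : ∃ p, p ∈ dom U ∧ p ≠ List.replicate p.length false := by
    by_contra hcon
    push_neg at hcon
    have h0 := hcon p₀ hm₀
    have h1 := hcon p₁ hm₁
    apply hne
    rcases le_total p₀.length p₁.length with hl | hl
    · apply hsd p₀ hm₀ p₁ hm₁
      rw [List.prefix_iff_eq_take]
      conv_rhs => rw [h1]
      rw [List.take_replicate, min_eq_left hl]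
      exact h0
    · refine (hsd p₁ hm₁ p₀ hm₀ ?_).symm
      rw [List.prefix_iff_eq_take]
      conv_rhs => rw [h0]
      rw [List.take_replicate, min_eq_left hl]
      exact h1
  obtain ⟨ps, hms, hnrep⟩ := hstar
  have hζ_eq := zeta_eq U
  have hζΩ : zeta U ≤ Omega U := by
    rw [hζ_eq]
    exact ENNReal.tsum_le_tsum fun p => term_le _
  have hζfin : zeta U ≠ ⊤ := by
    intro h
    rw [h] at hζΩ
    exact absurd (top_le_iff.1 hζΩ ▸ hΩ1) (by simp)
  refine ⟨?_, ?_, ?_, ?_⟩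
  · -- 1 > Omega U
    by_cases hex : ∃ q : List Bool, ∀ p ∈ dom U, ¬ p <+: q ∧ ¬ q <+: p
    · obtain ⟨q, hq⟩ := hex
      have h1 := kraft_tsum_extra hsd hq
      have hlt : (1 : ℝ≥0∞) - 2⁻¹ ^ q.length < 1 := by
        apply ENNReal.sub_lt_self
        · simp
        · simp
        · exact pow_ne_zero _ (ENNReal.inv_ne_zero.2 ENNReal.ofNat_ne_top)
      exact lt_of_le_of_lt h1 hlt
    · exfalso
      apply main_contra U hU hsd hu
      intro q
      push_neg at hex
      obtain ⟨p, hp, h2⟩ := hex q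
      exact ⟨p, hp, by tauto⟩
  · -- Omega U > zeta U
    rw [hζ_eq]
    have := ENNReal.tsum_lt_tsum
      (f := fun p : ↥(dom U) => ((nuN (p : List Bool) : ℕ) : ℝ≥0∞)⁻¹)
      (g := fun p : ↥(dom U) => (2 : ℝ≥0∞)⁻¹ ^ (p : List Bool).length) (i := ⟨ps, hms⟩)
      (by rw [← hζ_eq]; exact hζfin)
      (fun p => term_le (p : List Bool))
      (term_lt ps hnrep)
    exact this
  · -- zeta U > Omega U / 2
    have hhalf : Omega U / 2 = ∑' p : dom U, (2 : ℝ≥0∞)⁻¹ ^ ((p : List Bool).length + 1) := by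
      rw [div_eq_mul_inv, Omega, ← ENNReal.tsum_mul_right]
      exact tsum_congr fun p => by rw [pow_succ]
    rw [hhalf, hζ_eq]
    apply ENNReal.tsum_lt_tsum
      (f := fun p : ↥(dom U) => (2 : ℝ≥0∞)⁻¹ ^ ((p : List Bool).length + 1))
      (g := fun p : ↥(dom U) => ((nuN (p : List Bool) : ℕ) : ℝ≥0∞)⁻¹) (i := ⟨p₀, hm₀⟩)
    · intro h
      have hle : ∑' p : ↥(dom U), (2 : ℝ≥0∞)⁻¹ ^ ((p : List Bool).length + 1)
          ≤ ∑' p : ↥(dom U), (2 : ℝ≥0∞)⁻¹ ^ (p : List Bool).length :=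
        ENNReal.tsum_le_tsum fun p => by
          exact pow_le_pow_of_le_one (zero_le) (ENNReal.inv_le_one.2 one_le_two) (by omega)
      rw [h] at hle
      have htop : Omega U = ⊤ := top_le_iff.1 hle
      rw [htop] at hΩ1
      simp at hΩ1
    · exact fun p => le_of_lt (term_gt _)
    · exact term_gt _
  · -- Omega U / 2 > 0
    have hpos : 0 < Omega U := by
      have hle : (2 : ℝ≥0∞)⁻¹ ^ p₀.length ≤ Omega U := ENNReal.le_tsum (⟨p₀, hm₀⟩ : ↥(dom U))
      refine lt_of_lt_of_le ?_ hle
      exact pos_iff_ne_zero.2 (pow_ne_zero _ (ENNReal.inv_ne_zero.2 ENNReal.ofNat_ne_top))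
    rw [gt_iff_lt, ENNReal.div_pos_iff]
    exact ⟨pos_iff_ne_zero.1 hpos, by simp⟩
end
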